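/- Let ω_1 ≥ ω_2 ≥ ⋯ ≥ ω_C be a nonincreasing sequence of positive real numbers. Then 1/ω_1 + ∑_{i=2}^C ω_i (1/ω_i² − 1/ω_{i−1}²) ≤ 2/ω_C. -/

import Mathlib

lemma step_ineq (a b : ℝ) (ha : 0 < a) (hb : 0 < b) (hba : b ≤ a) :
    b * (1 / b ^ 2 - 1 / a ^ 2) ≤ 2 / b - 2 / a := by
  rw [← sub_nonneg]
  have h : 2 / b - 2 / a - b * (1 / b ^ 2 - 1 / a ^ 2) = (a - b) ^ 2 / (a ^ 2 * b) := by
    field_simp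
    ring
  rw [h]
  positivity

theorem stmt_3 (C : ℕ) (hC : 1 ≤ C) (ω : ℕ → ℝ)
    (hpos : ∀ i ∈ Finset.Icc 1 C, 0 < ω i)
    (hmono : ∀ i ∈ Finset.Icc 2 C, ω i ≤ ω (i - 1)) :
    1 / ω 1 + ∑ i ∈ Finset.Icc 2 C, ω i * (1 / (ω i) ^ 2 - 1 / (ω (i - 1)) ^ 2)
      ≤ 2 / ω C := by
  induction C with
  | zero => omega
  | succ n ih =>
    rcases Nat.eq_or_lt_of_le hC with h1 | h1
    · have hn : n = 0 := by omega
      subst hn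
      simp only [Finset.Icc_eq_empty_of_lt (by norm_num : (1:ℕ) < 2), Finset.sum_empty,
        add_zero]
      have h := hpos 1 (by simp)
      rw [div_le_div_iff₀ h h]
      nlinarith
    · have hn : 1 ≤ n := by omega
      have hpos' : ∀ i ∈ Finset.Icc 1 n, 0 < ω i := fun i hi => by
        apply hpos; simp at hi ⊢; omega
      have hmono' : ∀ i ∈ Finset.Icc 2 n, ω i ≤ ω (i - 1) := fun i hi => by
        apply hmono; simp at hi ⊢; omega
      have ihn := ih hn hpos' hmono'
      rw [Finset.sum_Icc_succ_top (by omega : 2 ≤ n + 1)]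
      have ha : 0 < ω n := hpos n (by simp; omega)
      have hb : 0 < ω (n + 1) := hpos (n + 1) (by simp)
      have hba : ω (n + 1) ≤ ω n := by
        have := hmono (n + 1) (by simp; omega)
        simpa using this
      have key := step_ineq (ω n) (ω (n + 1)) ha hb hba
      simp only [Nat.add_sub_cancel]
      linarith
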